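/- Let p < q be integers, k, ℓ ≥ 1 with k + ℓ ≤ q - p, and let α be a family of commuting indeterminates indexed by ℤ. Then ∑_{j=p}^{q} e_{j-p-k}(-α_{p+1}, …, -α_{j-1}) · e_{q-j-ℓ}(-α_{j+1}, …, -α_{q-1}) = e_{q-p-k-ℓ}(-α_{p+1}, …, -α_{q-1}), where e_r denotes the r-th elementary symmetric polynomial (equal to 0 for r < 0 or r exceeding the number of variables, and e_0 = 1). -/

import Mathlib

/-- The elementary symmetric polynomial `e_r` evaluated at the values of `f` on the
finite set `s` of integer indices. -/
noncomputable def esymZ {K : Type*} [CommRing K] (f : ℤ → K) (s : Finset ℤ) (r : ℕ) : K :=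
  ∑ t ∈ s.powersetCard r, ∏ x ∈ t, f x

lemma esymZ_zero {K : Type*} [CommRing K] (f : ℤ → K) (s : Finset ℤ) :
    esymZ f s 0 = 1 := by
  simp [esymZ]

lemma esymZ_eq_zero {K : Type*} [CommRing K] (f : ℤ → K) {s : Finset ℤ} {r : ℕ}
    (h : s.card < r) : esymZ f s r = 0 := by
  simp [esymZ, Finset.powersetCard_eq_empty.2 h]

lemma esymZ_insert {K : Type*} [CommRing K] (f : ℤ → K) {a : ℤ} {s : Finset ℤ}
    (h : a ∉ s) (r : ℕ) :
    esymZ f (insert a s) (r + 1) = esymZ f s (r + 1) + f a * esymZ f s r := by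
  unfold esymZ
  rw [Finset.powersetCard_succ_insert h, Finset.sum_union, Finset.sum_image, Finset.mul_sum]
  · congr 1
    refine Finset.sum_congr rfl fun t ht => ?_
    rw [Finset.mem_powersetCard] at ht
    rw [Finset.prod_insert (fun hx => h (ht.1 hx))]
  · intro t1 h1 t2 h2 he
    rw [Finset.mem_coe, Finset.mem_powersetCard] at h1 h2
    have : ∀ x ∈ t1, x ∈ t2 := by
      intro x hx
      have := he ▸ (Finset.mem_insert_of_mem hx : x ∈ insert a t1)
      rcases Finset.mem_insert.1 this with rfl | hx2
      · exact absurd (h1.1 hx) h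
      · exact hx2
    have : ∀ x ∈ t2, x ∈ t1 := by
      intro x hx
      have := he ▸ (Finset.mem_insert_of_mem hx : x ∈ insert a t2)
      rcases Finset.mem_insert.1 this with rfl | hx2
      · exact absurd (h2.1 hx) h
      · exact hx2
    exact Finset.Subset.antisymm (by intro x hx; exact ‹∀ x ∈ t1, x ∈ t2› x hx) this
  · rw [Finset.disjoint_left]
    intro t ht1 ht2
    rw [Finset.mem_powersetCard] at ht1
    rw [Finset.mem_image] at ht2
    obtain ⟨u, hu, rfl⟩ := ht2
    exact h (ht1.1 (Finset.mem_insert_self a u))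

lemma auxEdge {K : Type*} [CommRing K] (g : ℤ → K) (k l : ℕ) (p q : ℤ)
    (h : p + k + l = q) :
    ∑ j ∈ Finset.Icc p q,
        (if 0 ≤ j - p - k ∧ 0 ≤ q - j - l then
          esymZ g (Finset.Ioo p j) (j - p - k).toNat *
            esymZ g (Finset.Ioo j q) (q - j - l).toNat
        else 0) =
      esymZ g (Finset.Ioo p q) (q - p - k - l).toNat := by
  rw [show (q - p - (k:ℤ) - l).toNat = 0 by omega, esymZ_zero]
  rw [Finset.sum_eq_single (p + k)]
  · rw [if_pos ⟨by omega, by omega⟩,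
      show ((p + (k:ℤ)) - p - k).toNat = 0 by omega,
      show (q - (p + (k:ℤ)) - l).toNat = 0 by omega, esymZ_zero, esymZ_zero, mul_one]
  · intro j hj hne
    rw [Finset.mem_Icc] at hj
    rw [if_neg (by omega)]
  · intro h'
    exact absurd (Finset.mem_Icc.2 ⟨by omega, by omega⟩) h'

lemma auxL0 {K : Type*} [CommRing K] (g : ℤ → K) (k : ℕ) (p q : ℤ)
    (h : p + k ≤ q) :
    ∑ j ∈ Finset.Icc p q,
        (if 0 ≤ j - p - k ∧ 0 ≤ q - j then
          esymZ g (Finset.Ioo p j) (j - p - k).toNat *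
            esymZ g (Finset.Ioo j q) (q - j).toNat
        else 0) =
      esymZ g (Finset.Ioo p q) (q - p - k).toNat := by
  rw [Finset.sum_eq_single q]
  · rw [if_pos ⟨by omega, by omega⟩, show (q - q).toNat = 0 by omega, esymZ_zero, mul_one]
  · intro j hj hne
    rw [Finset.mem_Icc] at hj
    split_ifs with hc
    · rw [esymZ_eq_zero g (s := Finset.Ioo j q) (r := (q - j).toNat) (by rw [Int.card_Ioo]; omega), mul_zero]
    · rfl
  · intro h'
    exact absurd (Finset.mem_Icc.2 ⟨by omega, by omega⟩) h'

lemma auxMain {K : Type*} [CommRing K] (g : ℤ → K) (k : ℕ) :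
    ∀ n l : ℕ, ∀ p q : ℤ, q - p = n → p + k + l ≤ q →
    ∑ j ∈ Finset.Icc p q,
        (if 0 ≤ j - p - k ∧ 0 ≤ q - j - l then
          esymZ g (Finset.Ioo p j) (j - p - k).toNat *
            esymZ g (Finset.Ioo j q) (q - j - l).toNat
        else 0) =
      esymZ g (Finset.Ioo p q) (q - p - k - l).toNat := by
  intro n
  induction n with
  | zero =>
    intro l p q hn h
    exact auxEdge g k l p q (by omega)
  | succ n ih =>
    intro l p q hn h
    by_cases hedge : p + (k:ℤ) + l = q
    · exact auxEdge g k l p q hedge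
    rcases l with _ | l'
    · simpa using auxL0 g k p q (by omega)
    · -- main induction step
      push_cast
      push_cast at h hedge
      have hq : p < q - 1 := by omega
      have key : ∀ j ∈ Finset.Icc p (q - 1),
          (if 0 ≤ j - p - k ∧ 0 ≤ q - j - (↑l' + 1) then
            esymZ g (Finset.Ioo p j) (j - p - k).toNat *
              esymZ g (Finset.Ioo j q) (q - j - (↑l' + 1)).toNat
          else 0) =
          (if 0 ≤ j - p - k ∧ 0 ≤ q - 1 - j - l' then
            esymZ g (Finset.Ioo p j) (j - p - k).toNat *
              esymZ g (Finset.Ioo j (q - 1)) (q - 1 - j - l').toNat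
          else 0) +
          g (q - 1) *
          (if 0 ≤ j - p - k ∧ 0 ≤ q - 1 - j - (↑l' + 1) then
            esymZ g (Finset.Ioo p j) (j - p - k).toNat *
              esymZ g (Finset.Ioo j (q - 1)) (q - 1 - j - (↑l' + 1)).toNat
          else 0) := by
        intro j hj
        rw [Finset.mem_Icc] at hj
        by_cases hc1 : 0 ≤ j - p - (k:ℤ)
        · by_cases hc2 : 0 ≤ q - j - ((l':ℤ) + 1)
          · by_cases hc3 : 0 ≤ q - 1 - j - ((l':ℤ) + 1)
            · -- j + l' + 1 < q
              rw [if_pos ⟨hc1, hc2⟩, if_pos ⟨hc1, by omega⟩, if_pos ⟨hc1, hc3⟩]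
              have hsplit : Finset.Ioo j q = insert (q - 1) (Finset.Ioo j (q - 1)) := by
                ext x
                simp only [Finset.mem_Ioo, Finset.mem_insert]
                omega
              rw [hsplit, show (q - j - ((l':ℤ) + 1)).toNat
                    = (q - 1 - j - ((l':ℤ) + 1)).toNat + 1 by omega,
                esymZ_insert g (by simp) _,
                show (q - 1 - j - ((l':ℤ) + 1)).toNat + 1 = (q - 1 - j - (l':ℤ)).toNat by omega]
              ring
            · -- j + l' + 1 = q
              rw [if_pos ⟨hc1, hc2⟩, if_pos ⟨hc1, by omega⟩, if_neg (by omega),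
                show (q - j - ((l':ℤ) + 1)).toNat = 0 by omega,
                show (q - 1 - j - (l':ℤ)).toNat = 0 by omega, esymZ_zero, esymZ_zero]
              ring
          · rw [if_neg (by omega), if_neg (by omega), if_neg (by omega)]; ring
        · rw [if_neg (by omega), if_neg (by omega), if_neg (by omega)]; ring
      have hIcc : Finset.Icc p q = insert q (Finset.Icc p (q - 1)) := by
        ext x
        simp only [Finset.mem_Icc, Finset.mem_insert]
        omega
      rw [hIcc, Finset.sum_insert (by simp only [Finset.mem_Icc]; omega),
        if_neg (by omega), zero_add, Finset.sum_congr rfl key, Finset.sum_add_distrib,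
        ← Finset.mul_sum]
      have ih1 := ih l' p (q - 1) (by omega) (by omega)
      have ih2 := ih (l' + 1) p (q - 1) (by omega) (by omega)
      push_cast at ih1 ih2
      rw [ih1, ih2]
      have hsplit : Finset.Ioo p q = insert (q - 1) (Finset.Ioo p (q - 1)) := by
        ext x
        simp only [Finset.mem_Ioo, Finset.mem_insert]
        omega
      rw [hsplit, show (q - p - (k:ℤ) - ((l':ℤ) + 1)).toNat
            = (q - 1 - p - (k:ℤ) - ((l':ℤ) + 1)).toNat + 1 by omega,
        esymZ_insert g (by simp) _,
        show (q - 1 - p - (k:ℤ) - ((l':ℤ) + 1)).toNat + 1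
            = (q - 1 - p - (k:ℤ) - (l':ℤ)).toNat by omega]

/-- The `β = 0` specialization of the convolution identity for deformed current
coefficient matrices: for `p < q`, `k, ℓ ≥ 1` with `k + ℓ ≤ q - p`,
`∑_{j=p}^{q} e_{j-p-k}(-α_{p+1},…,-α_{j-1}) e_{q-j-ℓ}(-α_{j+1},…,-α_{q-1})
  = e_{q-p-k-ℓ}(-α_{p+1},…,-α_{q-1})` (with `e` of negative index equal to `0`). -/
theorem stmt_13 {K : Type*} [CommRing K] (α : ℤ → K) (p q k l : ℤ)
    (hpq : p < q) (hk : 1 ≤ k) (hl : 1 ≤ l) (hkl : k + l ≤ q - p) :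
    ∑ j ∈ Finset.Icc p q,
        (if 0 ≤ j - p - k ∧ 0 ≤ q - j - l then
          esymZ (fun i => -α i) (Finset.Ioo p j) (j - p - k).toNat *
            esymZ (fun i => -α i) (Finset.Ioo j q) (q - j - l).toNat
        else 0) =
      esymZ (fun i => -α i) (Finset.Ioo p q) (q - p - k - l).toNat := by
  have H := auxMain (fun i => -α i) k.toNat (q - p).toNat l.toNat p q (by omega) (by omega)
  rw [Int.toNat_of_nonneg (by omega : (0:ℤ) ≤ k), Int.toNat_of_nonneg (by omega : (0:ℤ) ≤ l)] at H
  exact H
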